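/- Let 0 ≤ P_fa < P_d < 1 and 0 < π_{1,0} < π_{1,1} < 1 with (1−P_d)(1−π_{1,0}) < (1−P_fa)(1−π_{1,1}). Then π_{1,0}/π_{1,1} + ((1−P_fa)/(1−P_d))·log((1−π_{1,0})/(1−π_{1,1})) > (1−π_{1,0})/(1−π_{1,1}) + ((1−P_fa)/(1−P_d))·log(π_{1,0}/π_{1,1}). -/
import Mathlib


/-- Sign condition on `dD_k/dε > 0` for deviations `(p − ε, p)`:
`π₁₀/π₁₁ + ((1−P_fa)/(1−P_d))·log((1−π₁₀)/(1−π₁₁)) >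
 (1−π₁₀)/(1−π₁₁) + ((1−P_fa)/(1−P_d))·log(π₁₀/π₁₁)`. -/
theorem stmt_7 (Pfa Pd π10 π11 : ℝ)
    (hPfa : 0 ≤ Pfa) (hPfaPd : Pfa < Pd) (hPd : Pd < 1)
    (hπ10 : 0 < π10) (hπ : π10 < π11) (hπ11 : π11 < 1)
    (hcross : (1 - Pd) * (1 - π10) < (1 - Pfa) * (1 - π11)) :
    π10 / π11 + ((1 - Pfa) / (1 - Pd)) * Real.log ((1 - π10) / (1 - π11)) >
      (1 - π10) / (1 - π11) + ((1 - Pfa) / (1 - Pd)) * Real.log (π10 / π11) := by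
  set a := π10 / π11 with ha_def
  set b := (1 - π10) / (1 - π11) with hb_def
  set r := (1 - Pfa) / (1 - Pd) with hr_def
  have hπ11pos : 0 < π11 := hπ10.trans hπ
  have h1π11 : 0 < 1 - π11 := by linarith
  have h1π10 : 0 < 1 - π10 := by linarith
  have h1Pd : 0 < 1 - Pd := by linarith
  have ha_pos : 0 < a := div_pos hπ10 hπ11pos
  have ha_lt : a < 1 := (div_lt_one hπ11pos).mpr hπ
  have hb_gt : 1 < b := (one_lt_div h1π11).mpr (by linarith)
  have hb_pos : 0 < b := by linarith
  have hbr : b < r := by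
    rw [hb_def, hr_def, div_lt_div_iff₀ h1π11 h1Pd]
    nlinarith
  have hba : 1 < b / a := by
    rw [lt_div_iff₀ ha_pos]; nlinarith
  have hlog_pos : 0 < Real.log (b / a) := Real.log_pos hba
  have hkey : Real.log (a / b) < a / b - 1 :=
    Real.log_lt_sub_one_of_pos (div_pos ha_pos hb_pos) (by
      intro h
      have : a = b := by field_simp at h; linarith
      linarith)
  have hlog_inv : Real.log (a / b) = - Real.log (b / a) := by
    rw [Real.log_div ha_pos.ne' hb_pos.ne', Real.log_div hb_pos.ne' ha_pos.ne']
    ring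
  have h2 : 1 - a / b < Real.log (b / a) := by
    rw [hlog_inv] at hkey; linarith
  have h3 : b - a < b * Real.log (b / a) := by
    have := mul_lt_mul_of_pos_left h2 hb_pos
    have hba' : b * (a / b) = a := by field_simp
    nlinarith
  have h4 : b * Real.log (b / a) < r * Real.log (b / a) :=
    mul_lt_mul_of_pos_right hbr hlog_pos
  have h5 : Real.log (b / a) = Real.log b - Real.log a := by
    rw [Real.log_div hb_pos.ne' ha_pos.ne']
  nlinarith [h3, h4, h5]
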